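/- For every two-sided ideal I of F, the homogenization I^* equals the two-sided ideal of F̄ generated by the set {f^* : f ∈ I, f ≠ 0} together with C, i.e. I^* = ⟨f^* : 0 ≠ f ∈ I⟩ + C. -/

import Mathlib

noncomputable section

/-! ### Common definitions for the letterplace correspondence (La Scala)

`FA K Y` is the free associative algebra `K⟨Y⟩` (monoid algebra of the free monoid on `Y`);
`PL K Y` is the letterplace polynomial algebra `K[y(j) : y ∈ Y, j ∈ ℕ*]`.
The algebra `F̄ = K⟨X ∪ {t}⟩` is modeled as `FA K (Option X)` with `t = none`,
and similarly `P̄ = PL K (Option X)`. -/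

/-- The free associative algebra `K⟨Y⟩`. -/
abbrev FA (K : Type*) [CommSemiring K] (Y : Type*) := MonoidAlgebra K (FreeMonoid Y)

/-- The letterplace polynomial algebra `K[y(j)]`, with places in `ℕ* = ℕ+`. -/
abbrev PL (K : Type*) [CommSemiring K] (Y : Type*) := MvPolynomial (Y × ℕ+) K

variable (K : Type*) [Field K]

/-- The generator of `K⟨Y⟩` corresponding to a letter. -/
def gen {Y : Type*} (y : Y) : FA K Y := MonoidAlgebra.of K (FreeMonoid Y) (FreeMonoid.of y)

/-- The extra letter `t` of `F̄ = K⟨X ∪ {t}⟩`. -/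
def tv {X : Type*} : FA K (Option X) := gen K (none : Option X)

/-- `φ : F̄ → F̄`, the algebra endomorphism with `φ(x_i) = x_i`, `φ(t) = 1`. -/
def phi {X : Type*} : FA K (Option X) →ₐ[K] FA K (Option X) :=
  (MonoidAlgebra.lift K (FA K (Option X)) (FreeMonoid (Option X)))
    (FreeMonoid.lift fun o => Option.elim o 1 (fun x => gen K (some x)))

/-- `f` is homogeneous of degree `d` (all words in its support have length `d`). -/
def IsHomog {Y : Type*} (d : ℕ) (f : FA K Y) : Prop :=
  ∀ w ∈ f.coeff.support, FreeMonoid.length w = d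

/-- The homogeneous component of degree `d` of `f ∈ K⟨Y⟩`. -/
def homComp {Y : Type*} (d : ℕ) (f : FA K Y) : FA K Y :=
  ∑ w ∈ f.coeff.support.filter (fun w => FreeMonoid.length w = d), MonoidAlgebra.single w (f.coeff w)

/-- A two-sided ideal is graded (for the grading by total degree) iff it contains all
homogeneous components of its elements. -/
def IsGradedF {Y : Type*} (I : TwoSidedIdeal (FA K Y)) : Prop := ∀ f ∈ I, ∀ d, homComp K d f ∈ I

/-- `C ⊆ F̄`: the two-sided ideal generated by all homogeneous elements of `ker φ`,
i.e. the largest graded ideal contained in `ker φ`. -/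
def Cideal {X : Type*} : TwoSidedIdeal (FA K (Option X)) :=
  TwoSidedIdeal.span {f | (∃ d, IsHomog K d f) ∧ phi K f = 0}

/-- The embedding of free monoids `X* → (X ∪ {t})*`. -/
def embWord {X : Type*} : FreeMonoid X →* FreeMonoid (Option X) := FreeMonoid.map some

/-- The canonical embedding `F = K⟨X⟩ → F̄ = K⟨X ∪ {t}⟩`. -/
def emb {X : Type*} : FA K X →ₐ[K] FA K (Option X) :=
  (MonoidAlgebra.lift K (FA K (Option X)) (FreeMonoid X))
    ((MonoidAlgebra.of K (FreeMonoid (Option X))).comp embWord)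

/-- The top degree `deg(f)` of `f` (max length of a word in the support). -/
def degF {Y : Type*} (f : FA K Y) : ℕ := f.coeff.support.sup FreeMonoid.length

/-- The homogenization `f^* = Σ_k f_k t^{deg f − k} ∈ F̄` of `f ∈ F`. -/
def hstar {X : Type*} (f : FA K X) : FA K (Option X) :=
  ∑ w ∈ f.coeff.support,
    MonoidAlgebra.single
      (embWord w * (FreeMonoid.of (none : Option X)) ^ (degF K f - FreeMonoid.length w)) (f.coeff w)

/-- Homogenization of an element already written in `F̄` (used for elements of `φ(F̄) = F`). -/
def hstarO {X : Type*} (f : FA K (Option X)) : FA K (Option X) :=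
  ∑ w ∈ f.coeff.support,
    MonoidAlgebra.single
      (w * (FreeMonoid.of (none : Option X)) ^ (degF K f - FreeMonoid.length w)) (f.coeff w)

/-- The homogenization `I^*` of an ideal `I ⊆ F`: the two-sided ideal of `F̄` generated by all
homogeneous elements of `φ⁻¹(I)` (identifying `F` with its image in `F̄`). -/
def hstarIdeal {X : Type*} (I : TwoSidedIdeal (FA K X)) : TwoSidedIdeal (FA K (Option X)) :=
  TwoSidedIdeal.span {g | (∃ d, IsHomog K d g) ∧ ∃ f ∈ I, phi K g = emb K f}

/-- The saturation `Sat(J) = φ(J)^*` of a graded ideal `C ⊆ J ⊆ F̄`: the two-sided ideal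
generated by all homogeneous elements `g` with `φ(g) ∈ φ(J)`. -/
def SatF {X : Type*} (J : TwoSidedIdeal (FA K (Option X))) : TwoSidedIdeal (FA K (Option X)) :=
  TwoSidedIdeal.span {g | (∃ d, IsHomog K d g) ∧ ∃ h ∈ J, phi K g = phi K h}

/-! ### The commutative (letterplace) side -/

/-- The shift of letterplace variables: `k · y(j) = y(j + k)`. -/
def shiftVar {Y : Type*} (k : ℕ) (p : Y × ℕ+) : Y × ℕ+ :=
  (p.1, ⟨p.2 + k, Nat.add_pos_left p.2.2 k⟩)

/-- The action of `k ∈ ℕ` on the letterplace algebra. -/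
def shift {Y : Type*} (k : ℕ) : PL K Y →ₐ[K] PL K Y := MvPolynomial.rename (shiftVar k)

/-- An ideal of `PL K Y` is an ℕ-ideal if it is stable under all shifts. -/
def IsNIdeal {Y : Type*} (I : Ideal (PL K Y)) : Prop := ∀ k, ∀ f ∈ I, shift K k f ∈ I

/-- The ℕ-ideal `⟨S⟩_ℕ` generated by a set `S`. -/
def nspan {Y : Type*} (S : Set (PL K Y)) : Ideal (PL K Y) :=
  Ideal.span {g | ∃ k, ∃ f ∈ S, g = shift K k f}

/-- The place multidegree `∂(m)` of a monomial. -/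
def placeDeg {Y : Type*} (m : (Y × ℕ+) →₀ ℕ) : ℕ+ →₀ ℕ := Finsupp.mapDomain Prod.snd m

/-- `f` is multihomogeneous of place multidegree `μ`. -/
def IsMultiHomog {Y : Type*} (μ : ℕ+ →₀ ℕ) (f : PL K Y) : Prop :=
  ∀ m ∈ f.support, placeDeg m = μ

/-- The multihomogeneous component of multidegree `μ` of `f`. -/
def mComp {Y : Type*} (μ : ℕ+ →₀ ℕ) (f : PL K Y) : PL K Y :=
  ∑ m ∈ f.support.filter (fun m => placeDeg m = μ),
    MvPolynomial.monomial m (MvPolynomial.coeff m f)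

/-- An ideal is multigraded iff it contains all multihomogeneous components of its elements. -/
def IsMultiGraded {Y : Type*} (I : Ideal (PL K Y)) : Prop := ∀ f ∈ I, ∀ μ, mComp K μ f ∈ I

/-- `ψ : P̄ → P̄`, with `ψ(x_i(j)) = x_i(j)` and `ψ(t(j)) = 1`. -/
def psi {X : Type*} : PL K (Option X) →ₐ[K] PL K (Option X) :=
  MvPolynomial.aeval (fun p => Option.elim p.1 1 (fun x => MvPolynomial.X (some x, p.2)))

/-- The canonical embedding `P → P̄`. -/
def embP {X : Type*} : PL K X →ₐ[K] PL K (Option X) :=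
  MvPolynomial.rename (fun p => (some p.1, p.2))

/-- The top multidegree `∂(f)` of `f` (componentwise max over the support). -/
def topDeg {Y : Type*} (f : PL K Y) : ℕ+ →₀ ℕ := f.support.sup placeDeg

/-- The pure-`t` monomial `∏_k t(k)^{ν_k}` with exponents `ν`. -/
def tExp {X : Type*} (ν : ℕ+ →₀ ℕ) : ((Option X) × ℕ+) →₀ ℕ :=
  Finsupp.mapDomain (fun k => ((none : Option X), k)) ν

/-- The multihomogenization `f^* = Σ_μ f_μ ∏_k t(k)^{ν_k − μ_k} ∈ P̄` of `f ∈ P`. -/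
def mhstar {X : Type*} (f : PL K X) : PL K (Option X) :=
  ∑ m ∈ f.support,
    MvPolynomial.monomial
      (Finsupp.mapDomain (fun p => ((some p.1 : Option X), p.2)) m +
        tExp (topDeg K f - placeDeg m))
      (MvPolynomial.coeff m f)

/-- Multihomogenization of an element already written in `P̄` (used for elements of `ψ(P̄) = P`). -/
def mhstarO {X : Type*} (f : PL K (Option X)) : PL K (Option X) :=
  ∑ m ∈ f.support,
    MvPolynomial.monomial (m + tExp (topDeg K f - placeDeg m)) (MvPolynomial.coeff m f)

/-- The multihomogenization `I^*` of an ℕ-ideal `I ⊆ P`: the ℕ-ideal of `P̄` generated by all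
multihomogeneous elements of `ψ⁻¹(I)` (identifying `P` with its image in `P̄`). -/
def mhstarIdeal {X : Type*} (I : Ideal (PL K X)) : Ideal (PL K (Option X)) :=
  nspan K {g | (∃ μ, IsMultiHomog K μ g) ∧ ∃ f ∈ I, psi K g = embP K f}

/-- The saturation `Sat(J) = ψ(J)^*` of a multigraded ℕ-ideal `J ⊆ P̄`. -/
def SatP {X : Type*} (J : Ideal (PL K (Option X))) : Ideal (PL K (Option X)) :=
  nspan K {g | (∃ μ, IsMultiHomog K μ g) ∧ ∃ h ∈ J, psi K g = psi K h}

/-! ### The letterplace embedding -/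

/-- Exponent vector of the letterplace monomial `y_1(n+1) y_2(n+2) ⋯` of a word. -/
def wordExpAux {Y : Type*} : ℕ → List Y → ((Y × ℕ+) →₀ ℕ)
  | _, [] => 0
  | n, y :: w => Finsupp.single (y, ⟨n + 1, n.succ_pos⟩) 1 + wordExpAux (n + 1) w

/-- The letterplace monomial `y_1(1) y_2(2) ⋯ y_d(d)` of a word `y_1 y_2 ⋯ y_d`. -/
def wordExp {Y : Type*} (w : FreeMonoid Y) : (Y × ℕ+) →₀ ℕ := wordExpAux 0 (FreeMonoid.toList w)

/-- The letterplace embedding `ι : K⟨Y⟩ → PL K Y` (a `K`-linear map). -/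
def iota {Y : Type*} (f : FA K Y) : PL K Y :=
  Finsupp.sum f.coeff fun w c => MvPolynomial.monomial (wordExp w) c

/-- The set `L` of multilinear elements of `PL K Y`: multihomogeneous elements of `V = Im ι`. -/
def Lset {Y : Type*} : Set (PL K Y) :=
  {f | f ∈ Set.range (iota K (Y := Y)) ∧ ∃ μ, IsMultiHomog K μ f}

/-- A letterplace ideal (`L`-ideal): an ℕ-ideal ℕ-generated by its multilinear elements. -/
def IsLPIdeal {Y : Type*} (J : Ideal (PL K Y)) : Prop :=
  IsNIdeal K J ∧ J = nspan K ((J : Set (PL K Y)) ∩ Lset K)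

/-- The generators `x_i(1)t(2) − t(1)x_i(2)` of `D`. -/
def Dgens (X : Type*) : Set (PL K (Option X)) :=
  {g | ∃ x : X,
    g = MvPolynomial.X ((some x : Option X), (1 : ℕ+)) *
          MvPolynomial.X ((none : Option X), (2 : ℕ+)) -
        MvPolynomial.X ((none : Option X), (1 : ℕ+)) *
          MvPolynomial.X ((some x : Option X), (2 : ℕ+))}

/-- The generators `ῑ([t, x_i]) = t(1)x_i(2) − x_i(1)t(2)` of `D`. -/
def DgensT (X : Type*) : Set (PL K (Option X)) :=
  {g | ∃ x : X,
    g = MvPolynomial.X ((none : Option X), (1 : ℕ+)) *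
          MvPolynomial.X ((some x : Option X), (2 : ℕ+)) -
        MvPolynomial.X ((some x : Option X), (1 : ℕ+)) *
          MvPolynomial.X ((none : Option X), (2 : ℕ+))}

/-- `D ⊆ P̄`: the letterplace analogue of `C`. -/
def Did (X : Type*) : Ideal (PL K (Option X)) := nspan K (Dgens K X)

/-- The product `∏_{d < k ≤ d'} t(k)`. -/
def tProd (X : Type*) (d d' : ℕ) : PL K (Option X) :=
  ∏ k ∈ Finset.range (d' - d), MvPolynomial.X ((none : Option X), ⟨d + k + 1, Nat.succ_pos _⟩)

/-- The `L`-saturation `Sat_L(J)` of a letterplace ideal `D ⊆ J ⊆ P̄`. -/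
def SatL {X : Type*} (J : Ideal (PL K (Option X))) : Ideal (PL K (Option X)) :=
  nspan K {f | f ∈ Lset K ∧ ∃ d', MvPolynomial.totalDegree f ≤ d' ∧
    tProd K X (MvPolynomial.totalDegree f) d' * f ∈ J}

/-- `J` is `L`-saturated: `t(d+1)·f ∈ J` with `f` multilinear of degree `d` implies `f ∈ J`. -/
def IsLSat {X : Type*} (J : Ideal (PL K (Option X))) : Prop :=
  ∀ f ∈ Lset K (Y := Option X),
    MvPolynomial.X ((none : Option X), ⟨MvPolynomial.totalDegree f + 1, Nat.succ_pos _⟩) * f ∈ J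
      → f ∈ J

/-! ### Monomial orderings -/

/-- The shift action on letterplace monomials. -/
def shiftMon {Y : Type*} (k : ℕ) (m : (Y × ℕ+) →₀ ℕ) : (Y × ℕ+) →₀ ℕ :=
  Finsupp.mapDomain (shiftVar k) m

/-- A monomial ordering of a (possibly infinite) commutative polynomial ring, given as a strict
order relation on exponent vectors: a well-founded strict total order with `1` minimal,
compatible with multiplication of monomials. -/
structure IsMonOrd {σ : Type*} (r : (σ →₀ ℕ) → (σ →₀ ℕ) → Prop) : Prop where
  total : ∀ m n, r m n ∨ m = n ∨ r n m
  irrefl : ∀ m, ¬ r m m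
  trans : ∀ a b c, r a b → r b c → r a c
  wf : WellFounded r
  zero_min : ∀ m, ¬ r m 0
  add_compat : ∀ m n u, r m n → r (u + m) (u + n)

/-- The ordering is compatible with the ℕ-action (an `ℕ`-ordering). -/
def IsNCompat {Y : Type*} (r : ((Y × ℕ+) →₀ ℕ) → ((Y × ℕ+) →₀ ℕ) → Prop) : Prop :=
  ∀ (k : ℕ) m n, r m n → r (shiftMon k m) (shiftMon k n)

/-- The weight of a letterplace monomial: the largest place index occurring in it
(`⊥ = -∞` for the monomial `1`). -/
def wt {Y : Type*} (m : (Y × ℕ+) →₀ ℕ) : WithBot ℕ :=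
  m.support.sup (fun p => ((p.2 : ℕ) : WithBot ℕ))

/-- A weighted ordering: smaller weight implies smaller monomial. -/
def IsWeighted {Y : Type*} (r : ((Y × ℕ+) →₀ ℕ) → ((Y × ℕ+) →₀ ℕ) → Prop) : Prop :=
  ∀ m n, wt m < wt n → r m n

/-- A monomial ordering of the free algebra `K⟨Y⟩`: a well-founded strict total order on words
compatible with two-sided multiplication. -/
structure IsWordOrd {Y : Type*} (r : FreeMonoid Y → FreeMonoid Y → Prop) : Prop where
  total : ∀ m n, r m n ∨ m = n ∨ r n m
  irrefl : ∀ m, ¬ r m m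
  trans : ∀ a b c, r a b → r b c → r a c
  wf : WellFounded r
  mul_compat : ∀ m n u v, r m n → r (u * m * v) (u * n * v)

/-- A word ordering is graded if shorter words are smaller. -/
def IsGradedWordOrd {Y : Type*} (r : FreeMonoid Y → FreeMonoid Y → Prop) : Prop :=
  ∀ m n, FreeMonoid.length m < FreeMonoid.length n → r m n

/-- The word ordering of `K⟨Y⟩` induced by a monomial ordering of `PL K Y` via `ι`. -/
def inducedWordOrd {Y : Type*} (r : ((Y × ℕ+) →₀ ℕ) → ((Y × ℕ+) →₀ ℕ) → Prop)
    (m n : FreeMonoid Y) : Prop := r (wordExp m) (wordExp n)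

/-- The factor of a letterplace monomial at place `j` (a monomial of `P(j) ≅ P(1)`). -/
def fiber {Y : Type*} (m : (Y × ℕ+) →₀ ℕ) (j : ℕ+) : Y →₀ ℕ :=
  Finsupp.comapDomain (fun y => (y, j)) m (fun _ _ _ _ h => congrArg Prod.fst h)

/-- The place `ℕ`-ordering of `PL K Y` induced by a monomial ordering `r1` of `P(1)`:
compare the factors at the highest place where the two monomials differ. -/
def placeExt {Y : Type*} (r1 : (Y →₀ ℕ) → (Y →₀ ℕ) → Prop)
    (m n : (Y × ℕ+) →₀ ℕ) : Prop :=
  ∃ j : ℕ+, r1 (fiber m j) (fiber n j) ∧ ∀ j', j < j' → fiber m j' = fiber n j'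

/-! ### Leading monomials and Gröbner bases -/

/-- `m` is the leading monomial of `f ∈ PL K Y` with respect to the ordering `r`. -/
def IsLM {Y : Type*} (r : ((Y × ℕ+) →₀ ℕ) → ((Y × ℕ+) →₀ ℕ) → Prop)
    (f : PL K Y) (m : (Y × ℕ+) →₀ ℕ) : Prop :=
  m ∈ f.support ∧ ∀ m' ∈ f.support, m' ≠ m → r m' m

/-- `LM(S)`: the ideal generated by the leading monomials of the nonzero elements of `S`. -/
def LMideal {Y : Type*} (r : ((Y × ℕ+) →₀ ℕ) → ((Y × ℕ+) →₀ ℕ) → Prop)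
    (S : Set (PL K Y)) : Ideal (PL K Y) :=
  Ideal.span {p | ∃ f ∈ S, f ≠ 0 ∧ ∃ m, IsLM K r f m ∧ p = MvPolynomial.monomial m (1 : K)}

/-- The ideal generated by `ℕ·lm(G)`. -/
def shLMideal {Y : Type*} (r : ((Y × ℕ+) →₀ ℕ) → ((Y × ℕ+) →₀ ℕ) → Prop)
    (G : Set (PL K Y)) : Ideal (PL K Y) :=
  Ideal.span {p | ∃ g ∈ G, g ≠ 0 ∧ ∃ m, IsLM K r g m ∧
    ∃ k : ℕ, p = MvPolynomial.monomial (shiftMon k m) (1 : K)}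

/-- `G ⊆ I` is a Gröbner `ℕ`-basis of the ℕ-ideal `I`: `ℕ·lm(G)` generates `LM(I)`. -/
def IsGroebnerNB {Y : Type*} (r : ((Y × ℕ+) →₀ ℕ) → ((Y × ℕ+) →₀ ℕ) → Prop)
    (I : Ideal (PL K Y)) (G : Set (PL K Y)) : Prop :=
  G ⊆ (I : Set (PL K Y)) ∧ shLMideal K r G = LMideal K r (I : Set (PL K Y))

/-- `G` is a Gröbner `L`-basis of the letterplace ideal `J`: `G ⊆ J ∩ L` and the leading monomial
of every nonzero multilinear element of `J` is divisible by a shift of some `lm(g)`, `g ∈ G`. -/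
def IsGroebnerLB {Y : Type*} (r : ((Y × ℕ+) →₀ ℕ) → ((Y × ℕ+) →₀ ℕ) → Prop)
    (J : Ideal (PL K Y)) (G : Set (PL K Y)) : Prop :=
  G ⊆ (J : Set (PL K Y)) ∩ Lset K ∧
  ∀ f ∈ (J : Set (PL K Y)) ∩ Lset K, f ≠ 0 →
    ∃ g ∈ G, ∃ (k : ℕ) (mg mf : (Y × ℕ+) →₀ ℕ),
      IsLM K r g mg ∧ IsLM K r f mf ∧ shiftMon k mg ≤ mf

/-- `w` is the leading monomial (word) of `f ∈ K⟨Y⟩` with respect to the word ordering `r'`. -/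
def IsLMF {Y : Type*} (r' : FreeMonoid Y → FreeMonoid Y → Prop)
    (f : FA K Y) (w : FreeMonoid Y) : Prop :=
  w ∈ f.coeff.support ∧ ∀ w' ∈ f.coeff.support, w' ≠ w → r' w' w

/-- `G ⊆ I` is a Gröbner basis of the two-sided ideal `I ⊆ K⟨Y⟩`: the leading word of every
nonzero `f ∈ I` has the form `u · lm(g) · v` for some nonzero `g ∈ G`. -/
def IsGroebnerBF {Y : Type*} (r' : FreeMonoid Y → FreeMonoid Y → Prop)
    (I : TwoSidedIdeal (FA K Y)) (G : Set (FA K Y)) : Prop :=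
  G ⊆ (I : Set (FA K Y)) ∧
  ∀ f ∈ I, f ≠ 0 → ∃ g ∈ G, g ≠ 0 ∧ ∃ (u v wf wg : FreeMonoid Y),
    IsLMF K r' f wf ∧ IsLMF K r' g wg ∧ wf = u * wg * v

/-! ### Normal forms -/

/-- The generators `x_i(1) x_j(1)` of `N`. -/
def Ngens (Y : Type*) : Set (PL K Y) :=
  {g | ∃ i j : Y, g = MvPolynomial.X (i, (1 : ℕ+)) * MvPolynomial.X (j, (1 : ℕ+))}

/-- A polynomial is in normal form modulo `N` iff in each of its monomials all place indices
are pairwise distinct. -/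
def NormalModN {Y : Type*} (f : PL K Y) : Prop :=
  ∀ m ∈ f.support, ∀ k : ℕ+, placeDeg m k ≤ 1

/-- A polynomial is in normal form modulo `D` iff none of its monomials is divisible by a shift
of the leading monomial of some generator `t(1)x_i(2) − x_i(1)t(2)` of `D`. -/
def NormalModD {X : Type*} (r : (((Option X) × ℕ+) →₀ ℕ) → (((Option X) × ℕ+) →₀ ℕ) → Prop)
    (f : PL K (Option X)) : Prop :=
  ∀ m ∈ f.support, ∀ g ∈ DgensT K X, ∀ mg, IsLM K r g mg → ∀ k : ℕ, ¬ shiftMon k mg ≤ m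

/-- `G` is a Gröbner `L`-basis of `J` modulo `D`: its elements are multilinear elements of `J`
in normal form modulo `D`, and together with the generators of `D` they form a
Gröbner `L`-basis of `J`. -/
def IsGroebnerLBmodD {X : Type*}
    (r : (((Option X) × ℕ+) →₀ ℕ) → (((Option X) × ℕ+) →₀ ℕ) → Prop)
    (J : Ideal (PL K (Option X))) (G : Set (PL K (Option X))) : Prop :=
  (∀ g ∈ G, g ∈ (J : Set (PL K (Option X))) ∩ Lset K ∧ NormalModD K r g) ∧
  IsGroebnerLB K r J (G ∪ DgensT K X)

/-- The commutators `[t, x_i] = t x_i − x_i t` in `F̄`. -/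
def commGens (X : Type*) : Set (FA K (Option X)) :=
  {h | ∃ x : X, h = tv K * gen K (some x) - gen K (some x) * tv K}

/-- A polynomial of `F̄` is in normal form modulo `C` iff none of its words contains the leading
word of some commutator `[t, x_i]` as a factor. -/
def NormalModC {X : Type*} (r' : FreeMonoid (Option X) → FreeMonoid (Option X) → Prop)
    (f : FA K (Option X)) : Prop :=
  ∀ w ∈ f.coeff.support, ∀ g ∈ commGens K X, ∀ wg, IsLMF K r' g wg →
    ¬ ∃ u v, w = u * wg * v

/-! ### Concrete orderings on words -/

/-- The order on the letters of `X ∪ {t}` (with `X = ℕ`): `t ≺ x_1 ≺ x_2 ≺ ⋯`. -/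
def optLt : Option ℕ → Option ℕ → Prop
  | none, some _ => True
  | some i, some j => i < j
  | _, none => False

/-- The graded right lexicographic ordering on words: first compare lengths, then compare
letter by letter from the right. -/
def grRightLex {Y : Type*} (lt : Y → Y → Prop) (dflt : Y) (m n : FreeMonoid Y) : Prop :=
  FreeMonoid.length m < FreeMonoid.length n ∨
  (FreeMonoid.length m = FreeMonoid.length n ∧
    ∃ t < FreeMonoid.length m,
      lt ((FreeMonoid.toList m).getD t dflt) ((FreeMonoid.toList n).getD t dflt) ∧
      ∀ s, t < s → (FreeMonoid.toList m).getD s dflt = (FreeMonoid.toList n).getD s dflt)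

end

noncomputable section AuxStatement1

open MonoidAlgebra

variable (K : Type*) [Field K] {X : Type*}

/-- The retraction `(X ∪ {t})* → X*` deleting the letter `t`. -/
def stripWord {X : Type*} : FreeMonoid (Option X) →* FreeMonoid X :=
  FreeMonoid.lift fun o => Option.elim o 1 FreeMonoid.of

lemma stripWord_embWord (w : FreeMonoid X) : stripWord (embWord w) = w := by
  have : (stripWord (X := X)).comp embWord = MonoidHom.id _ :=
    FreeMonoid.hom_eq fun x => by
      simp [stripWord, embWord, FreeMonoid.map_of]
  exact DFunLike.congr_fun this w

lemma stripWord_t_pow (k : ℕ) :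
    stripWord ((FreeMonoid.of (none : Option X)) ^ k) = 1 := by
  rw [map_pow]
  simp [stripWord, one_pow]

lemma length_stripWord_le (w : FreeMonoid (Option X)) :
    FreeMonoid.length (stripWord w) ≤ FreeMonoid.length w := by
  induction w using FreeMonoid.inductionOn' with
  | one => simp
  | of_mul x xs ih =>
    rw [map_mul, FreeMonoid.length_mul, FreeMonoid.length_mul]
    refine Nat.add_le_add ?_ ih
    cases x <;> simp [stripWord]

lemma length_embWord (w : FreeMonoid X) :
    FreeMonoid.length (embWord w) = FreeMonoid.length w := by
  rw [FreeMonoid.length, FreeMonoid.length]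
  change ((FreeMonoid.map some) w).toList.length = w.toList.length
  rw [FreeMonoid.toList_map, List.length_map]

lemma length_t_pow (k : ℕ) :
    FreeMonoid.length ((FreeMonoid.of (none : Option X)) ^ k) = k := by
  induction k with
  | zero => simp
  | succ n ih => rw [pow_succ, FreeMonoid.length_mul, ih, FreeMonoid.length_of]

lemma phi_single (w : FreeMonoid (Option X)) (c : K) :
    phi K (MonoidAlgebra.single w c) =
      MonoidAlgebra.single (embWord (stripWord w)) c := by
  have key : (FreeMonoid.lift fun o : Option X =>
      Option.elim o 1 (fun x => gen K (some x))) =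
      (MonoidAlgebra.of K (FreeMonoid (Option X))).comp
        (embWord.comp (stripWord (X := X))) :=
    FreeMonoid.hom_eq fun o => by
      cases o <;> simp [stripWord, embWord, gen, FreeMonoid.map_of, MonoidAlgebra.one_def]
  rw [phi, MonoidAlgebra.lift_single, key]
  simp [MonoidAlgebra.of_apply, MonoidAlgebra.smul_single', mul_one]

lemma emb_single (w : FreeMonoid X) (c : K) :
    emb K (MonoidAlgebra.single w c) = MonoidAlgebra.single (embWord w) c := by
  rw [emb, MonoidAlgebra.lift_single]
  simp [MonoidAlgebra.of_apply, MonoidAlgebra.smul_single', mul_one]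

lemma emb_eq_sum (f : FA K X) :
    emb K f = ∑ w ∈ f.coeff.support, MonoidAlgebra.single (embWord w) (f.coeff w) := by
  conv_lhs => rw [← MonoidAlgebra.sum_coeff_single f]
  rw [Finsupp.sum, map_sum]
  exact Finset.sum_congr rfl fun w _ => emb_single K w (f.coeff w)

lemma tv_pow (k : ℕ) :
    (tv K (X := X)) ^ k
      = MonoidAlgebra.single ((FreeMonoid.of (none : Option X)) ^ k) (1 : K) := by
  rw [tv, gen, MonoidAlgebra.of_apply, MonoidAlgebra.single_pow, one_pow]

lemma phi_tv : phi K (tv K (X := X)) = 1 := by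
  rw [tv, gen, MonoidAlgebra.of_apply, phi_single]
  have : stripWord (FreeMonoid.of (none : Option X)) = 1 := by simp [stripWord]
  rw [this, map_one, MonoidAlgebra.one_def]

lemma phi_hstar (f : FA K X) : phi K (hstar K f) = emb K f := by
  rw [hstar, map_sum, emb_eq_sum]
  refine Finset.sum_congr rfl fun w _ => ?_
  rw [phi_single, map_mul, stripWord_embWord, stripWord_t_pow, mul_one]

lemma isHomog_single {Y : Type*} (w : FreeMonoid Y) (c : K) :
    IsHomog K (FreeMonoid.length w) (MonoidAlgebra.single w c) := by
  intro u hu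
  have := Finsupp.support_single_subset hu
  simp only [Finset.mem_singleton] at this
  subst this; rfl

lemma isHomog_sub {Y : Type*} {d : ℕ} {a b : FA K Y}
    (ha : IsHomog K d a) (hb : IsHomog K d b) : IsHomog K d (a - b) := by
  classical
  intro w hw
  have := Finsupp.support_sub (f := a.coeff) (g := b.coeff) hw
  rcases Finset.mem_union.mp this with h | h
  · exact ha w h
  · exact hb w h

lemma isHomog_mul {Y : Type*} {d e : ℕ} {a b : FA K Y}
    (ha : IsHomog K d a) (hb : IsHomog K e b) : IsHomog K (d + e) (a * b) := by
  classical
  intro w hw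
  have := MonoidAlgebra.support_coeff_mul_subset a b hw
  obtain ⟨u, hu, v, hv, h3⟩ := Finset.mem_mul.mp this
  subst h3
  rw [FreeMonoid.length_mul, ha u hu, hb v hv]

lemma isHomog_hstar (f : FA K X) : IsHomog K (degF K f) (hstar K f) := by
  intro w hw
  obtain ⟨u, hu, h2⟩ := Finsupp.mem_support_finset_sum w
    (by rwa [hstar, MonoidAlgebra.coeff_sum] at hw)
  have h3 := Finsupp.support_single_subset h2
  simp only [Finset.mem_singleton] at h3
  subst h3
  rw [FreeMonoid.length_mul, length_embWord, length_t_pow]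
  have : FreeMonoid.length u ≤ degF K f := Finset.le_sup hu
  omega

lemma degF_le_of_isHomog {Y : Type*} {d : ℕ} {g : FA K Y} (hg : IsHomog K d g) :
    degF K g ≤ d :=
  Finset.sup_le fun w hw => le_of_eq (hg w hw)

lemma degF_phi_le (g : FA K (Option X)) : degF K (phi K g) ≤ degF K g := by
  have hrep : phi K g = ∑ w ∈ g.coeff.support,
      MonoidAlgebra.single (embWord (stripWord w)) (g.coeff w) := by
    conv_lhs => rw [← MonoidAlgebra.sum_coeff_single g]
    rw [Finsupp.sum, map_sum]
    exact Finset.sum_congr rfl fun w _ => phi_single K w (g.coeff w)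
  refine Finset.sup_le fun u hu => ?_
  rw [hrep, MonoidAlgebra.coeff_sum] at hu
  obtain ⟨w, hw, h2⟩ := Finsupp.mem_support_finset_sum u hu
  have h3 := Finsupp.support_single_subset h2
  simp only [Finset.mem_singleton] at h3
  subst h3
  calc FreeMonoid.length (embWord (stripWord w))
      = FreeMonoid.length (stripWord w) := length_embWord (stripWord w)
    _ ≤ FreeMonoid.length w := length_stripWord_le w
    _ ≤ degF K g := Finset.le_sup hw

lemma embWord_injective : Function.Injective (embWord (X := X)) := by
  intro u v h
  have : FreeMonoid.toList u = FreeMonoid.toList v := by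
    have h2 : (FreeMonoid.toList u).map some = (FreeMonoid.toList v).map some := by
      have := congrArg FreeMonoid.toList h
      simpa [embWord, FreeMonoid.toList_map] using this
    exact List.map_injective_iff.mpr (Option.some_injective X) h2
  exact FreeMonoid.toList.injective this

lemma emb_eq_mapDomain (f : FA K X) :
    emb K f = MonoidAlgebra.mapDomain embWord f := by
  induction f using MonoidAlgebra.induction with
  | zero => simp
  | single_add w c f hw hc ih =>
    rw [MonoidAlgebra.mapDomain_add, ← ih, MonoidAlgebra.mapDomain_single]
    rw [map_add]
    congr 1
    exact emb_single K w c

lemma degF_emb (f : FA K X) : degF K (emb K f) = degF K f := by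
  classical
  rw [emb_eq_mapDomain, degF, degF, MonoidAlgebra.mapDomain, MonoidAlgebra.coeff_ofCoeff,
    Finsupp.mapDomain_support_of_injective embWord_injective]
  rw [Finset.sup_image]
  exact Finset.sup_congr rfl fun w _ => length_embWord w

lemma span_le' {R : Type*} [NonUnitalNonAssocRing R] {s : Set R}
    {J : TwoSidedIdeal R} (h : s ⊆ J) : TwoSidedIdeal.span s ≤ J :=
  fun _ hx => TwoSidedIdeal.mem_span_iff.mp hx J h

end AuxStatement1

/-- For every two-sided ideal `I ⊆ F`, the homogenization `I^*` equals the
two-sided ideal of `F̄` generated by `{f^* : 0 ≠ f ∈ I}` together with `C`. -/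
theorem statement_1 (K : Type*) [Field K] (X : Type*) [Countable X]
    (I : TwoSidedIdeal (FA K X)) :
    hstarIdeal K I =
      TwoSidedIdeal.span {g | ∃ f ∈ I, f ≠ 0 ∧ g = hstar K f} ⊔ Cideal K := by
  classical
  apply le_antisymm
  · -- `I^* ≤ ⟨hstar f⟩ ⊔ C`
    refine span_le' ?_
    rintro g ⟨⟨d, hg⟩, f, hfI, hphi⟩
    by_cases hf : f = 0
    · subst hf
      rw [map_zero] at hphi
      have hC : g ∈ Cideal K (X := X) :=
        TwoSidedIdeal.subset_span ⟨⟨d, hg⟩, hphi⟩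
      exact SetLike.le_def.mp
        (le_sup_right :
          Cideal K ≤ TwoSidedIdeal.span {g | ∃ f ∈ I, f ≠ 0 ∧ g = hstar K f} ⊔ Cideal K) hC
    · have hdf : degF K f ≤ d := by
        calc degF K f = degF K (emb K f) := (degF_emb K f).symm
          _ = degF K (phi K g) := by rw [hphi]
          _ ≤ degF K g := degF_phi_le K g
          _ ≤ d := degF_le_of_isHomog K hg
      set k := d - degF K f with hk
      set h2 : FA K (Option X) := hstar K f * (tv K) ^ k with hh2
      have hmem2 : h2 ∈ TwoSidedIdeal.span {g | ∃ f ∈ I, f ≠ 0 ∧ g = hstar K f} :=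
        TwoSidedIdeal.mul_mem_right _ _ _ (TwoSidedIdeal.subset_span ⟨f, hfI, hf, rfl⟩)
      have hphi2 : phi K h2 = emb K f := by
        rw [hh2, map_mul, map_pow, phi_tv, one_pow, mul_one, phi_hstar]
      have htv : IsHomog K k ((tv K (X := X)) ^ k) := by
        rw [tv_pow]
        have := isHomog_single K ((FreeMonoid.of (none : Option X)) ^ k) (1 : K)
        rwa [length_t_pow] at this
      have hhom2 : IsHomog K d h2 := by
        have := isHomog_mul K (isHomog_hstar K f) htv
        rwa [Nat.add_sub_cancel' hdf] at this
      have hC : g - h2 ∈ Cideal K (X := X) :=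
        TwoSidedIdeal.subset_span
          ⟨⟨d, isHomog_sub K hg hhom2⟩, by rw [map_sub, hphi, hphi2, sub_self]⟩
      have hsum : g = h2 + (g - h2) := by abel
      rw [hsum]
      exact (TwoSidedIdeal.span {g | ∃ f ∈ I, f ≠ 0 ∧ g = hstar K f} ⊔ Cideal K).add_mem
        (SetLike.le_def.mp (le_sup_left :
          TwoSidedIdeal.span {g | ∃ f ∈ I, f ≠ 0 ∧ g = hstar K f} ≤ _) hmem2)
        (SetLike.le_def.mp (le_sup_right : Cideal K ≤ _) hC)
  · refine sup_le (span_le' ?_) (span_le' ?_)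
    · rintro g ⟨f, hfI, hf, rfl⟩
      exact TwoSidedIdeal.subset_span
        ⟨⟨degF K f, isHomog_hstar K f⟩, f, hfI, phi_hstar K f⟩
    · rintro g ⟨⟨d, hg⟩, hphi⟩
      exact TwoSidedIdeal.subset_span
        ⟨⟨d, hg⟩, 0, I.zero_mem, by rw [hphi, map_zero]⟩
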